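/- For s, t > 0 and x ≥ 1 with x > 1 (so that ln_s x > 0), exp( ((x^s log x - ln_s x)(t - s))/(s ln_s x) ) · ln_s x ≤ ln_t x ≤ exp( ((x^t log x - ln_t x)(t - s))/(t ln_t x) ) · ln_s x. -/

import Mathlib

open Real

theorem stmt_18 (s t x : ℝ) (hs : 0 < s) (ht : 0 < t) (hx : 1 < x) :
    Real.exp ((x ^ s * Real.log x - (x ^ s - 1) / s) * (t - s) / (s * ((x ^ s - 1) / s))) *
        ((x ^ s - 1) / s) ≤ (x ^ t - 1) / t ∧
      (x ^ t - 1) / t ≤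
        Real.exp ((x ^ t * Real.log x - (x ^ t - 1) / t) * (t - s) / (t * ((x ^ t - 1) / t))) *
          ((x ^ s - 1) / s) := by
  have hx0 : (0:ℝ) < x := lt_trans one_pos hx
  set L := Real.log x with hLdef
  have hL : 0 < L := Real.log_pos hx
  set E : ℝ → ℝ := fun u => Real.exp (L * u) with hEdef
  have hrpow : ∀ u : ℝ, x ^ u = E u := by
    intro u
    rw [Real.rpow_def_of_pos hx0]
  have hE1 : ∀ u : ℝ, 0 < u → 1 < E u := by
    intro u hu
    have h1 : 0 < L * u := mul_pos hL hu
    calc (1:ℝ) = Real.exp 0 := Real.exp_zero.symm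
    _ < Real.exp (L * u) := Real.exp_lt_exp.2 h1
  have hne : ∀ u : ℝ, 0 < u → E u - 1 ≠ 0 := fun u hu => ne_of_gt (by linarith [hE1 u hu])
  have hEderiv : ∀ u : ℝ, HasDerivAt E (L * E u) u := by
    intro u
    have h1 : HasDerivAt (fun v : ℝ => L * v) L u := by
      simpa using (hasDerivAt_id u).const_mul L
    have h2 := h1.exp
    simpa [hEdef, mul_comm] using h2
  set d : ℝ → ℝ := fun u => L * E u / (E u - 1) - u⁻¹ with hddef
  set h : ℝ → ℝ := fun u => Real.log (E u - 1) - Real.log u with hhdef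
  have hhderiv : ∀ u : ℝ, 0 < u → HasDerivAt h (d u) u := by
    intro u hu
    have h1 : HasDerivAt (fun v => Real.log (E v - 1)) (L * E u / (E u - 1)) u :=
      ((hEderiv u).sub_const 1).log (hne u hu)
    have h2 : HasDerivAt Real.log u⁻¹ u := Real.hasDerivAt_log (ne_of_gt hu)
    exact h1.sub h2
  set d' : ℝ → ℝ := fun u => ((E u - 1)^2 - L^2 * u^2 * E u) / (u^2 * (E u - 1)^2) with hd'def
  have hdderiv : ∀ u : ℝ, 0 < u → HasDerivAt d (d' u) u := by
    intro u hu
    have hnum : HasDerivAt (fun v => L * E v) (L * (L * E u)) u := (hEderiv u).const_mul L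
    have hden : HasDerivAt (fun v => E v - 1) (L * E u) u := (hEderiv u).sub_const 1
    have h1 := hnum.div hden (hne u hu)
    have h2 : HasDerivAt (fun v : ℝ => v⁻¹) (-(u^2)⁻¹) u := hasDerivAt_inv (ne_of_gt hu)
    have h3 := h1.sub h2
    convert h3 using 1
    have hu' : u ≠ 0 := ne_of_gt hu
    have he' : E u - 1 ≠ 0 := hne u hu
    case e'_4 => rfl
    case e'_5 => rfl
    case e'_8 => rfl
    simp only [hd'def]
    field_simp
    rw [sub_neg_eq_add, div_add_one (pow_ne_zero 2 (hne u hu))]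
    ring
  have hd'nonneg : ∀ u : ℝ, 0 < u → 0 ≤ d' u := by
    intro u hu
    have hE1u := hE1 u hu
    have key : L^2 * u^2 * E u ≤ (E u - 1)^2 := by
      have hy : (0:ℝ) ≤ L * u / 2 := by positivity
      have hsinh : L * u / 2 ≤ Real.sinh (L * u / 2) := Real.self_le_sinh_iff.2 hy
      have hsq : Real.exp (L*u/2) * Real.exp (L*u/2) = E u := by
        rw [← Real.exp_add]
        simp only [hEdef]
        congr 1
        ring
      have hinv : Real.exp (L*u/2) * Real.exp (-(L*u/2)) = 1 := by
        rw [← Real.exp_add]; simp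
      have hfact : E u - 1 = Real.exp (L*u/2) * (2 * Real.sinh (L*u/2)) := by
        rw [Real.sinh_eq]
        linear_combination hinv - hsq
      have hex : 0 < Real.exp (L*u/2) := Real.exp_pos _
      have hss : (L*u/2) * (L*u/2) ≤ Real.sinh (L*u/2) * Real.sinh (L*u/2) :=
        mul_self_le_mul_self hy hsinh
      nlinarith [hss, hex, hsq, hfact, hE1u]
    have hpos : (0:ℝ) < u^2 * (E u - 1)^2 := by
      have : (0:ℝ) < E u - 1 := by linarith
      positivity
    simp only [hd'def]
    exact div_nonneg (by linarith) (le_of_lt hpos)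
  have hmono : ∀ a b : ℝ, 0 < a → a < b → d a ≤ d b := by
    intro a b ha hab
    obtain ⟨c, hc, hceq⟩ := exists_hasDerivAt_eq_slope d d' hab
      (fun u hu => ((hdderiv u (lt_of_lt_of_le ha hu.1)).continuousAt).continuousWithinAt)
      (fun u hu => hdderiv u (lt_trans ha hu.1))
    have h0 := hd'nonneg c (lt_trans ha hc.1)
    rw [hceq] at h0
    have hba : 0 < b - a := by linarith
    have h1 : 0 ≤ d b - d a := by
      have h2 := mul_nonneg h0 hba.le
      rwa [div_mul_cancel₀ _ (ne_of_gt hba)] at h2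
    linarith
  have htan : d s * (t - s) ≤ h t - h s ∧ h t - h s ≤ d t * (t - s) := by
    rcases lt_trichotomy s t with hst | hst | hst
    · obtain ⟨c, hc, hceq⟩ := exists_hasDerivAt_eq_slope h d hst
        (fun u hu => ((hhderiv u (lt_of_lt_of_le hs hu.1)).continuousAt).continuousWithinAt)
        (fun u hu => hhderiv u (lt_trans hs hu.1))
      rw [eq_div_iff (sub_ne_zero.mpr hst.ne')] at hceq
      have heq : h t - h s = d c * (t - s) := by linear_combination -hceq
      have h1 := hmono s c hs hc.1
      have h2 := hmono c t (lt_trans hs hc.1) hc.2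
      have hts : 0 < t - s := by linarith
      constructor <;> nlinarith
    · rw [hst]; simp
    · obtain ⟨c, hc, hceq⟩ := exists_hasDerivAt_eq_slope h d hst
        (fun u hu => ((hhderiv u (lt_of_lt_of_le ht hu.1)).continuousAt).continuousWithinAt)
        (fun u hu => hhderiv u (lt_trans ht hu.1))
      rw [eq_div_iff (sub_ne_zero.mpr hst.ne')] at hceq
      have heq : h t - h s = d c * (t - s) := by linear_combination hceq
      have h1 := hmono t c ht hc.1
      have h2 := hmono c s (lt_trans ht hc.1) hc.2
      have hts : t - s < 0 := by linarith
      constructor <;> nlinarith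
  have hexp : ∀ u : ℝ, 0 < u → Real.exp (h u) = (x ^ u - 1) / u := by
    intro u hu
    have hpos : 0 < (E u - 1) / u := div_pos (by linarith [hE1 u hu]) hu
    simp only [hhdef]
    rw [← Real.log_div (hne u hu) (ne_of_gt hu), Real.exp_log hpos, hrpow u]
  have hargs : (x ^ s * L - (x ^ s - 1) / s) * (t - s) / (s * ((x ^ s - 1) / s)) = d s * (t - s) := by
    rw [hrpow s, hddef]
    have he' : E s - 1 ≠ 0 := hne s hs
    have hs' : s ≠ 0 := ne_of_gt hs
    field_simp
  have hargt : (x ^ t * L - (x ^ t - 1) / t) * (t - s) / (t * ((x ^ t - 1) / t)) = d t * (t - s) := by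
    rw [hrpow t, hddef]
    have he' : E t - 1 ≠ 0 := hne t ht
    have ht' : t ≠ 0 := ne_of_gt ht
    field_simp
  rw [hargs, hargt, ← hexp s hs, ← hexp t ht, ← Real.exp_add, ← Real.exp_add]
  constructor
  · exact Real.exp_le_exp.2 (by linarith [htan.1])
  · exact Real.exp_le_exp.2 (by linarith [htan.2])
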